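/- If X ≼_{BL} Y (Bickel-Lehmann less dispersed) and E[X] = E[Y], then Y is a mean preserving increase in risk of X: for every concave function f on R, E[f(X)] ≥ E[f(Y)]. -/

import Mathlib

open MeasureTheory

/-- The (upper) quantile function of a distribution on ℝ. -/
noncomputable def quantile (ν : Measure ℝ) (t : ℝ) : ℝ :=
  sInf {x : ℝ | ν (Set.Iic x) > ENNReal.ofReal t}

open Set Filter Topology

namespace QAux

variable {ν : Measure ℝ} {t : ℝ}

lemma exists_small [IsFiniteMeasure ν] (ht : 0 < t) :
    ∃ y : ℝ, ν (Iic y) < ENNReal.ofReal t := by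
  have hI : (⋂ n : ℕ, Iic (-(n : ℝ))) = ∅ := by
    ext x
    simp only [mem_iInter, mem_Iic, mem_empty_iff_false, iff_false, not_forall, not_le]
    obtain ⟨n, hn⟩ := exists_nat_gt (-x)
    exact ⟨n, by linarith⟩
  have h : Tendsto (fun n : ℕ => ν (Iic (-(n : ℝ)))) atTop (𝓝 0) := by
    have := tendsto_measure_iInter_atTop (μ := ν) (s := fun n : ℕ => Iic (-(n : ℝ)))
      (fun n => measurableSet_Iic.nullMeasurableSet)
      (fun a b hab => Iic_subset_Iic.2 (by simp; exact_mod_cast hab))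
      ⟨0, measure_ne_top _ _⟩
    rwa [hI, measure_empty] at this
  have hpos : (0 : ENNReal) < ENNReal.ofReal t := ENNReal.ofReal_pos.2 ht
  obtain ⟨n, hn⟩ := (h.eventually_lt_const hpos).exists
  exact ⟨-(n : ℝ), hn⟩

lemma bddBelow_setOf [IsFiniteMeasure ν] (ht : 0 < t) :
    BddBelow {x : ℝ | ν (Set.Iic x) > ENNReal.ofReal t} := by
  obtain ⟨y, hy⟩ := exists_small (ν := ν) ht
  exact ⟨y, fun z hz => le_of_not_gt fun hzy =>
    absurd (lt_of_le_of_lt (measure_mono (Iic_subset_Iic.2 hzy.le)) hy) (not_lt.2 hz.le)⟩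

lemma nonempty_setOf [IsProbabilityMeasure ν] (ht : t < 1) :
    {x : ℝ | ν (Set.Iic x) > ENNReal.ofReal t}.Nonempty := by
  have h := tendsto_measure_Iic_atTop (μ := ν)
  rw [measure_univ] at h
  have : ENNReal.ofReal t < 1 := by
    exact ENNReal.ofReal_lt_one.2 ht
  exact (h.eventually_const_lt this).exists

lemma quantile_le [IsFiniteMeasure ν] {x : ℝ} (ht : 0 < t)
    (h : ENNReal.ofReal t < ν (Set.Iic x)) : quantile ν t ≤ x :=
  csInf_le (bddBelow_setOf ht) h

lemma lt_quantile [IsProbabilityMeasure ν] {x : ℝ} (ht : t < 1)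
    (h : ν (Set.Iic x) < ENNReal.ofReal t) : x < quantile ν t := by
  have hI : (⋂ n : ℕ, Iic (x + 1 / ((n : ℝ) + 1))) = Iic x := by
    ext z
    simp only [mem_iInter, mem_Iic]
    constructor
    · intro hz
      by_contra hzx
      push_neg at hzx
      obtain ⟨n, hn⟩ := exists_nat_one_div_lt (sub_pos.2 hzx)
      have := hz n
      linarith
    · intro hz n
      have : (0 : ℝ) < 1 / ((n : ℝ) + 1) := by positivity
      linarith
  have hcont : Tendsto (fun n : ℕ => ν (Iic (x + 1 / ((n : ℝ) + 1)))) atTop (𝓝 (ν (Iic x))) := by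
    have := tendsto_measure_iInter_atTop (μ := ν) (s := fun n : ℕ => Iic (x + 1 / ((n : ℝ) + 1)))
      (fun n => measurableSet_Iic.nullMeasurableSet)
      (fun a b hab => Iic_subset_Iic.2 (by
        have : (1 : ℝ) / ((b : ℝ) + 1) ≤ 1 / ((a : ℝ) + 1) := by
          apply one_div_le_one_div_of_le (by positivity)
          exact_mod_cast add_le_add_left (Nat.cast_le.2 hab) 1
        linarith)) ⟨0, measure_ne_top _ _⟩
    rwa [hI] at this
  obtain ⟨n, hn⟩ := (hcont.eventually_lt_const h).exists
  have hlb : x + 1 / ((n : ℝ) + 1) ≤ quantile ν t := by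
    apply le_csInf (nonempty_setOf ht)
    intro z hz
    by_contra hzlt
    push_neg at hzlt
    exact absurd (lt_of_le_of_lt (measure_mono (Iic_subset_Iic.2 hzlt.le)) hn) (not_lt.2 hz.le)
  have : (0 : ℝ) < 1 / ((n : ℝ) + 1) := by positivity
  linarith

lemma quantile_monoOn [IsProbabilityMeasure ν] : MonotoneOn (quantile ν) (Ioo 0 1) := by
  intro s hs t ht hst
  apply csInf_le_csInf (bddBelow_setOf hs.1) (nonempty_setOf ht.2)
  intro x hx
  exact lt_of_le_of_lt (ENNReal.ofReal_le_ofReal hst) hx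

lemma meas_quantile_le [IsProbabilityMeasure ν] (x : ℝ) :
    volume {t : ℝ | t ∈ Ioo (0:ℝ) 1 ∧ quantile ν t ≤ x} = ν (Iic x) := by
  set m := (ν (Iic x)).toReal with hm
  have hnetop : ν (Iic x) ≠ ⊤ := measure_ne_top _ _
  have hm0 : 0 ≤ m := ENNReal.toReal_nonneg
  have hm1 : m ≤ 1 := by
    rw [hm]
    exact ENNReal.toReal_le_of_le_ofReal one_pos.le (by rw [ENNReal.ofReal_one]; exact prob_le_one (μ := ν))
  have hsub1 : Ioo (0:ℝ) m ⊆ {t : ℝ | t ∈ Ioo (0:ℝ) 1 ∧ quantile ν t ≤ x} := by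
    intro t ht
    refine ⟨⟨ht.1, lt_of_lt_of_le ht.2 hm1⟩, quantile_le ht.1 ?_⟩
    calc ENNReal.ofReal t < ENNReal.ofReal m :=
          (ENNReal.ofReal_lt_ofReal_iff_of_nonneg ht.1.le).2 ht.2
      _ = ν (Iic x) := ENNReal.ofReal_toReal hnetop
  have hsub2 : {t : ℝ | t ∈ Ioo (0:ℝ) 1 ∧ quantile ν t ≤ x} ⊆ Ioc (0:ℝ) m := by
    rintro t ⟨ht, hq⟩
    refine ⟨ht.1, ?_⟩
    by_contra hmt
    push_neg at hmt
    have : ν (Iic x) < ENNReal.ofReal t := by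
      rw [← ENNReal.ofReal_toReal hnetop]
      exact (ENNReal.ofReal_lt_ofReal_iff_of_nonneg hm0).2 hmt
    exact absurd hq (not_le.2 (lt_quantile ht.2 this))
  have h1 := measure_mono (μ := volume) hsub1
  have h2 := measure_mono (μ := volume) hsub2
  rw [Real.volume_Ioo, sub_zero] at h1
  rw [Real.volume_Ioc, sub_zero] at h2
  have : volume {t : ℝ | t ∈ Ioo (0:ℝ) 1 ∧ quantile ν t ≤ x} = ENNReal.ofReal m :=
    le_antisymm h2 h1
  rw [this, ENNReal.ofReal_toReal hnetop]

instance : IsProbabilityMeasure (volume.restrict (Ioo (0:ℝ) 1)) := by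
  constructor
  rw [Measure.restrict_apply_univ, Real.volume_Ioo]
  simp

lemma map_quantile [IsProbabilityMeasure ν] :
    (volume.restrict (Ioo (0:ℝ) 1)).map (quantile ν) = ν := by
  have hQm : AEMeasurable (quantile ν) (volume.restrict (Ioo (0:ℝ) 1)) :=
    aemeasurable_restrict_of_monotoneOn measurableSet_Ioo quantile_monoOn
  haveI : IsProbabilityMeasure ((volume.restrict (Ioo (0:ℝ) 1)).map (quantile ν)) :=
    Measure.isProbabilityMeasure_map hQm
  apply Measure.ext_of_Iic
  intro a
  rw [Measure.map_apply_of_aemeasurable hQm measurableSet_Iic,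
    Measure.restrict_apply' measurableSet_Ioo, ← meas_quantile_le (ν := ν) a]
  congr 1
  ext t
  simp only [mem_inter_iff, mem_preimage, mem_Iic, mem_setOf_eq]
  tauto

end QAux

lemma concave_key {f : ℝ → ℝ} (hf : ConcaveOn ℝ Set.univ f) (m : ℝ) :
    ∃ c : ℝ, (∀ a b : ℝ, a < b → b ≤ m → c * (b - a) ≤ f b - f a) ∧
      (∀ a b : ℝ, a < b → m ≤ a → f b - f a ≤ c * (b - a)) := by
  set S := (fun y => (f y - f m) / (y - m)) '' Ioi m with hS
  have hSne : S.Nonempty := ⟨_, ⟨m + 1, by simp, rfl⟩⟩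
  have hSbdd : BddAbove S := by
    refine ⟨(f m - f (m - 1)) / (m - (m - 1)), ?_⟩
    rintro s ⟨y, hy, rfl⟩
    exact hf.slope_anti_adjacent trivial trivial (by linarith) hy
  refine ⟨sSup S, ?_, ?_⟩
  · intro a b hab hbm
    have hc : sSup S ≤ (f b - f a) / (b - a) := by
      apply csSup_le hSne
      rintro s ⟨y, hy, rfl⟩
      rcases eq_or_lt_of_le hbm with h | h
      · subst h
        exact hf.slope_anti_adjacent trivial trivial hab hy
      · calc (f y - f m) / (y - m) ≤ (f m - f b) / (m - b) :=
              hf.slope_anti_adjacent trivial trivial h hy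
          _ ≤ (f b - f a) / (b - a) := hf.slope_anti_adjacent trivial trivial hab h
    have hba : (0:ℝ) < b - a := by linarith
    calc sSup S * (b - a) ≤ (f b - f a) / (b - a) * (b - a) := by
          exact mul_le_mul_of_nonneg_right hc hba.le
      _ = f b - f a := div_mul_cancel₀ _ hba.ne'
  · intro a b hab hma
    have hba : (0:ℝ) < b - a := by linarith
    have hc : (f b - f a) / (b - a) ≤ sSup S := by
      rcases eq_or_lt_of_le hma with h | h
      · subst h
        exact le_csSup hSbdd ⟨b, hab, rfl⟩
      · calc (f b - f a) / (b - a) ≤ (f a - f m) / (a - m) :=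
              hf.slope_anti_adjacent trivial trivial h hab
          _ ≤ sSup S := le_csSup hSbdd ⟨a, h, rfl⟩
    calc f b - f a = (f b - f a) / (b - a) * (b - a) := (div_mul_cancel₀ _ hba.ne').symm
      _ ≤ sSup S * (b - a) := mul_le_mul_of_nonneg_right hc hba.le

/-- if X ≼_BL Y (Q_Y - Q_X nondecreasing on (0,1)) and E[X] = E[Y], then
Y is a mean preserving increase in risk of X: E[f(X)] ≥ E[f(Y)] for all concave f. -/
theorem stmt_8 {Ω : Type*} [MeasurableSpace Ω] (P : Measure Ω) [IsProbabilityMeasure P]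
    (X Y : Ω → ℝ) (hX : Measurable X) (hY : Measurable Y)
    (hXi : Integrable X P) (hYi : Integrable Y P)
    (hBL : MonotoneOn (fun u => quantile (P.map Y) u - quantile (P.map X) u) (Set.Ioo 0 1))
    (hmean : ∫ ω, X ω ∂P = ∫ ω, Y ω ∂P)
    (f : ℝ → ℝ) (hf : ConcaveOn ℝ Set.univ f)
    (hfX : Integrable (fun ω => f (X ω)) P) (hfY : Integrable (fun ω => f (Y ω)) P) :
    ∫ ω, f (Y ω) ∂P ≤ ∫ ω, f (X ω) ∂P := by
  classical
  set ν := P.map X with hν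
  set ρ := P.map Y with hρ
  haveI hνp : IsProbabilityMeasure ν := Measure.isProbabilityMeasure_map hX.aemeasurable
  haveI hρp : IsProbabilityMeasure ρ := Measure.isProbabilityMeasure_map hY.aemeasurable
  set μ := volume.restrict (Ioo (0:ℝ) 1) with hμ
  set QX := quantile ν with hQXdef
  set QY := quantile ρ with hQYdef
  have hBL' : MonotoneOn (fun u => QY u - QX u) (Set.Ioo 0 1) := hBL
  have hQXm : AEMeasurable QX μ :=
    aemeasurable_restrict_of_monotoneOn measurableSet_Ioo QAux.quantile_monoOn
  have hQYm : AEMeasurable QY μ :=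
    aemeasurable_restrict_of_monotoneOn measurableSet_Ioo QAux.quantile_monoOn
  have hmapX : μ.map QX = ν := QAux.map_quantile
  have hmapY : μ.map QY = ρ := QAux.map_quantile
  have hfc : Continuous f := by
    have := hf.continuousOn_interior
    rw [interior_univ] at this
    exact continuousOn_univ.mp this
  -- integrability
  have hidX : Integrable id ν := by
    rw [hν, integrable_map_measure aestronglyMeasurable_id hX.aemeasurable]
    exact hXi
  have hidY : Integrable id ρ := by
    rw [hρ, integrable_map_measure aestronglyMeasurable_id hY.aemeasurable]
    exact hYi
  have hQXi : Integrable QX μ := by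
    have h1 : Integrable id (μ.map QX) := hmapX ▸ hidX
    rwa [integrable_map_measure aestronglyMeasurable_id hQXm] at h1
  have hQYi : Integrable QY μ := by
    have h1 : Integrable id (μ.map QY) := hmapY ▸ hidY
    rwa [integrable_map_measure aestronglyMeasurable_id hQYm] at h1
  have hfν : Integrable f ν := by
    rw [hν, integrable_map_measure hfc.aestronglyMeasurable hX.aemeasurable]
    exact hfX
  have hfρ : Integrable f ρ := by
    rw [hρ, integrable_map_measure hfc.aestronglyMeasurable hY.aemeasurable]
    exact hfY
  have hfQXi : Integrable (fun t => f (QX t)) μ := by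
    have h1 : Integrable f (μ.map QX) := hmapX ▸ hfν
    rwa [integrable_map_measure hfc.aestronglyMeasurable hQXm] at h1
  have hfQYi : Integrable (fun t => f (QY t)) μ := by
    have h1 : Integrable f (μ.map QY) := hmapY ▸ hfρ
    rwa [integrable_map_measure hfc.aestronglyMeasurable hQYm] at h1
  -- integral representations
  have hrepX : ∫ ω, X ω ∂P = ∫ t, QX t ∂μ := by
    have e1 : ∫ x, id x ∂ν = ∫ ω, id (X ω) ∂P := integral_map hX.aemeasurable aestronglyMeasurable_id
    have e2 : ∫ x, id x ∂ν = ∫ t, id (QX t) ∂μ := by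
      rw [← hmapX]
      exact integral_map hQXm aestronglyMeasurable_id
    simp only [id] at e1 e2
    rw [← e1, e2]
  have hrepY : ∫ ω, Y ω ∂P = ∫ t, QY t ∂μ := by
    have e1 : ∫ x, id x ∂ρ = ∫ ω, id (Y ω) ∂P := integral_map hY.aemeasurable aestronglyMeasurable_id
    have e2 : ∫ x, id x ∂ρ = ∫ t, id (QY t) ∂μ := by
      rw [← hmapY]
      exact integral_map hQYm aestronglyMeasurable_id
    simp only [id] at e1 e2
    rw [← e1, e2]
  have hrepfX : ∫ ω, f (X ω) ∂P = ∫ t, f (QX t) ∂μ := by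
    have e1 : ∫ x, f x ∂ν = ∫ ω, f (X ω) ∂P := integral_map hX.aemeasurable hfc.aestronglyMeasurable
    have e2 : ∫ x, f x ∂ν = ∫ t, f (QX t) ∂μ := by
      rw [← hmapX]
      exact integral_map hQXm hfc.aestronglyMeasurable
    rw [← e1, e2]
  have hrepfY : ∫ ω, f (Y ω) ∂P = ∫ t, f (QY t) ∂μ := by
    have e1 : ∫ x, f x ∂ρ = ∫ ω, f (Y ω) ∂P := integral_map hY.aemeasurable hfc.aestronglyMeasurable
    have e2 : ∫ x, f x ∂ρ = ∫ t, f (QY t) ∂μ := by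
      rw [← hmapY]
      exact integral_map hQYm hfc.aestronglyMeasurable
    rw [← e1, e2]
  set d := fun t => QY t - QX t with hd
  have hdi : Integrable d μ := hQYi.sub hQXi
  have hd0 : ∫ t, d t ∂μ = 0 := by
    rw [hd]
    rw [integral_sub hQYi hQXi, ← hrepX, ← hrepY, hmean, sub_self]
  rw [hrepfX, hrepfY]
  have heqcase : QY =ᵐ[μ] QX → ∫ t, f (QY t) ∂μ ≤ ∫ t, f (QX t) ∂μ := fun hae =>
    le_of_eq (integral_congr_ae (hae.mono fun t ht => by show f (QY t) = f (QX t); rw [ht]))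
  by_cases hneg : ∃ u ∈ Ioo (0:ℝ) 1, d u < 0
  swap
  · push_neg at hneg
    apply heqcase
    have hae : 0 ≤ᵐ[μ] d := (ae_restrict_mem measurableSet_Ioo).mono fun u hu => hneg u hu
    have hz := (integral_eq_zero_iff_of_nonneg_ae hae hdi).1 hd0
    exact hz.mono fun t ht => by
      have : QY t - QX t = 0 := ht
      linarith
  by_cases hpos : ∃ u ∈ Ioo (0:ℝ) 1, 0 < d u
  swap
  · push_neg at hpos
    apply heqcase
    have hae : 0 ≤ᵐ[μ] (fun t => -d t) :=
      (ae_restrict_mem measurableSet_Ioo).mono fun u hu => neg_nonneg.2 (hpos u hu)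
    have hz := (integral_eq_zero_iff_of_nonneg_ae hae hdi.neg).1
      (by rw [integral_neg, hd0, neg_zero])
    exact hz.mono fun t ht => by
      have : -(QY t - QX t) = 0 := ht
      linarith
  obtain ⟨u₁, hu₁, hd₁⟩ := hneg
  obtain ⟨u₂, hu₂, hd₂⟩ := hpos
  set T := {u : ℝ | u ∈ Ioo (0:ℝ) 1 ∧ 0 < d u} with hT
  have hTne : T.Nonempty := ⟨u₂, hu₂, hd₂⟩
  have hTbdd : BddBelow T := ⟨0, fun t ht => ht.1.1.le⟩
  have hu₁lb : ∀ t ∈ T, u₁ < t := by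
    intro t ht
    by_contra hle
    push_neg at hle
    have hmo := hBL' ht.1 hu₁ hle
    have h2 := ht.2
    linarith
  have hu₀ : sInf T ∈ Ioo (0:ℝ) 1 := by
    have h1 : u₁ ≤ sInf T := le_csInf hTne (fun t ht => (hu₁lb t ht).le)
    have h2 : sInf T ≤ u₂ := csInf_le hTbdd ⟨hu₂, hd₂⟩
    exact ⟨lt_of_lt_of_le hu₁.1 h1, lt_of_le_of_lt h2 hu₂.2⟩
  obtain ⟨c, hc1, hc2⟩ := concave_key hf (QX (sInf T))
  have hmono : MonotoneOn QX (Ioo (0:ℝ) 1) := QAux.quantile_monoOn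
  have key : ∀ u ∈ Ioo (0:ℝ) 1, f (QY u) ≤ f (QX u) + c * d u := by
    intro u hu
    rcases lt_trichotomy (d u) 0 with h | h | h
    · have hQ : QY u < QX u := by
        have : QY u - QX u < 0 := h
        linarith
      have hle : u ≤ sInf T := by
        apply le_csInf hTne
        intro t ht
        by_contra hlt
        push_neg at hlt
        have hmo := hBL' ht.1 hu hlt.le
        have h2 := ht.2
        linarith
      have hxm : QX u ≤ QX (sInf T) := hmono hu hu₀ hle
      have hk := hc1 (QY u) (QX u) hQ hxm
      have he : c * d u = -(c * (QX u - QY u)) := by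
        simp only [hd]; ring
      linarith
    · have h0 : QY u = QX u := by
        have : QY u - QX u = 0 := h
        linarith
      rw [h0, h, mul_zero, add_zero]
    · have hQ : QX u < QY u := by
        have : 0 < QY u - QX u := h
        linarith
      have hge : sInf T ≤ u := csInf_le hTbdd ⟨hu, h⟩
      have hxm : QX (sInf T) ≤ QX u := hmono hu₀ hu hge
      have hk := hc2 (QX u) (QY u) hQ hxm
      have he : c * d u = c * (QY u - QX u) := by simp only [hd]
      linarith
  calc ∫ t, f (QY t) ∂μ ≤ ∫ t, (f (QX t) + c * d t) ∂μ :=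
        integral_mono_ae hfQYi (hfQXi.add (hdi.const_mul c))
          ((ae_restrict_mem measurableSet_Ioo).mono fun u hu => key u hu)
    _ = ∫ t, f (QX t) ∂μ + c * ∫ t, d t ∂μ := by
        rw [integral_add hfQXi (hdi.const_mul c), integral_const_mul]
    _ = ∫ t, f (QX t) ∂μ := by rw [hd0, mul_zero, add_zero]
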